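/- For A ∈ ℝ^{m×m}, the following are equivalent: (1) every member of D(A) is an S-matrix; (2) every member of D(A) is a Q-matrix; (3) every member of D(A) is a P-matrix (LCP has unique solution for all q); (4) A is positive definite. -/

import Mathlib

open Matrix

/-- `B` has the feasibility (S-) property. -/
def Sprop {m : ℕ} (B : Matrix (Fin m) (Fin m) ℝ) : Prop :=
  ∀ q : Fin m → ℝ, ∃ x : Fin m → ℝ, (∀ i, 0 ≤ x i) ∧ ∀ i, 0 ≤ (B.mulVec x + q) i

/-- `B` has the Q-property: `LCP(ℝ^m_+, B, q)` is solvable for every `q`. -/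
def Qprop {m : ℕ} (B : Matrix (Fin m) (Fin m) ℝ) : Prop :=
  ∀ q : Fin m → ℝ, ∃ x : Fin m → ℝ, (∀ i, 0 ≤ x i) ∧
    (∀ i, 0 ≤ (B.mulVec x + q) i) ∧ x ⬝ᵥ (B.mulVec x + q) = 0

/-- `B` has the P-property: `LCP(ℝ^m_+, B, q)` has a unique solution for every `q`. -/
def Pprop {m : ℕ} (B : Matrix (Fin m) (Fin m) ℝ) : Prop :=
  ∀ q : Fin m → ℝ, ∃! x : Fin m → ℝ, (∀ i, 0 ≤ x i) ∧
    (∀ i, 0 ≤ (B.mulVec x + q) i) ∧ x ⬝ᵥ (B.mulVec x + q) = 0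

section Aux

open scoped RealInnerProductSpace

lemma lcp_exists {m : ℕ} (B : Matrix (Fin m) (Fin m) ℝ)
    (hB : ∀ x : Fin m → ℝ, x ≠ 0 → 0 < (B.mulVec x) ⬝ᵥ x) (q : Fin m → ℝ) :
    ∃ x : Fin m → ℝ, (∀ i, 0 ≤ x i) ∧ (∀ i, 0 ≤ (B.mulVec x + q) i) ∧
      x ⬝ᵥ (B.mulVec x + q) = 0 := by
  rcases Nat.eq_zero_or_pos m with hm | hm
  · subst hm
    exact ⟨0, fun i => i.elim0, fun i => i.elim0, by simp [dotProduct]⟩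
  haveI : Nonempty (Fin m) := ⟨⟨0, hm⟩⟩
  let T : EuclideanSpace ℝ (Fin m) →ₗ[ℝ] EuclideanSpace ℝ (Fin m) :=
    { toFun := fun x => WithLp.toLp 2 (B.mulVec x)
      map_add' := fun x y => by rw [WithLp.ofLp_add, Matrix.mulVec_add, WithLp.toLp_add]
      map_smul' := fun c x => by rw [WithLp.ofLp_smul, Matrix.mulVec_smul, WithLp.toLp_smul]; rfl }
  let Tc : EuclideanSpace ℝ (Fin m) →L[ℝ] EuclideanSpace ℝ (Fin m) := T.toContinuousLinearMap
  have hTc : ∀ z : EuclideanSpace ℝ (Fin m), Tc z = B.mulVec z := fun z => rfl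
  have hip : ∀ a b : EuclideanSpace ℝ (Fin m), ⟪a, b⟫ = (a : Fin m → ℝ) ⬝ᵥ (b : Fin m → ℝ) := by
    intro a b
    simp [PiLp.inner_apply, RCLike.inner_apply, dotProduct, mul_comm]
  set C : ℝ := ‖Tc‖ + 1 with hC
  have hC0 : 0 < C := by positivity
  have hTle : ∀ z : EuclideanSpace ℝ (Fin m), ‖Tc z‖ ≤ C * ‖z‖ := by
    intro z
    refine le_trans (Tc.le_opNorm z) ?_
    have := norm_nonneg z
    nlinarith
  -- minimum of the quadratic form on the sphere
  haveI : Nontrivial (EuclideanSpace ℝ (Fin m)) := by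
    refine ⟨EuclideanSpace.single ⟨0, hm⟩ (1:ℝ), 0, ?_⟩
    intro h
    have := congrFun (congrArg (fun (f : EuclideanSpace ℝ (Fin m)) => (f : Fin m → ℝ)) h) ⟨0, hm⟩
    simp [EuclideanSpace.single_apply] at this
  have hne : (Metric.sphere (0:EuclideanSpace ℝ (Fin m)) 1).Nonempty :=
    NormedSpace.sphere_nonempty.mpr zero_le_one
  have hcont : Continuous fun x : EuclideanSpace ℝ (Fin m) => ⟪Tc x, x⟫ :=
    Tc.continuous.inner continuous_id
  obtain ⟨v0, hv0mem, hv0min'⟩ :=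
    (isCompact_sphere (0:EuclideanSpace ℝ (Fin m)) 1).exists_isMinOn hne hcont.continuousOn
  have hv0 : ‖v0‖ = 1 := by simpa using hv0mem
  have hv0min : ∀ y ∈ Metric.sphere (0:EuclideanSpace ℝ (Fin m)) 1,
      ⟪Tc v0, v0⟫ ≤ ⟪Tc y, y⟫ := fun y hy => hv0min' hy
  set μ : ℝ := ⟪Tc v0, v0⟫ with hμ
  have hμpos : 0 < μ := by
    rw [hμ, hip, hTc]
    refine hB v0 ?_
    intro h
    rw [show v0 = 0 from by simpa using congrArg (WithLp.toLp 2) h] at hv0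
    simp at hv0
  -- strong monotonicity
  have hmono : ∀ z : EuclideanSpace ℝ (Fin m), μ * ‖z‖^2 ≤ ⟪Tc z, z⟫ := by
    intro z
    rcases eq_or_ne z 0 with rfl | hz
    · simp
    · have hnz : (0:ℝ) < ‖z‖ := norm_pos_iff.mpr hz
      have hw : ‖(‖z‖⁻¹ • z : EuclideanSpace ℝ (Fin m))‖ = 1 := by
        rw [norm_smul]; simp [abs_of_pos (inv_pos.mpr hnz)]
        field_simp
      have := hv0min _ (by simpa [Metric.mem_sphere, dist_zero_right] using hw)
      have hexp : ⟪Tc (‖z‖⁻¹ • z), (‖z‖⁻¹ • z)⟫ = ‖z‖⁻¹ * (‖z‖⁻¹ * ⟪Tc z, z⟫) := by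
        rw [Tc.map_smul, real_inner_smul_left, real_inner_smul_right]
      rw [hexp] at this
      have h7 : μ * ‖z‖^2 ≤ ‖z‖⁻¹ * (‖z‖⁻¹ * ⟪Tc z, z⟫) * ‖z‖^2 :=
        mul_le_mul_of_nonneg_right this (sq_nonneg _)
      have h8 : ‖z‖⁻¹ * (‖z‖⁻¹ * ⟪Tc z, z⟫) * ‖z‖^2 = ⟪Tc z, z⟫ := by
        have hzne : ‖z‖ ≠ 0 := ne_of_gt hnz
        have e : ‖z‖⁻¹ * (‖z‖⁻¹ * ⟪Tc z, z⟫) * ‖z‖^2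
            = ⟪Tc z, z⟫ * ((‖z‖⁻¹ * ‖z‖) * (‖z‖⁻¹ * ‖z‖)) := by ring
        rw [e, inv_mul_cancel₀ hzne]
        ring
      rw [h8] at h7
      exact h7
  have hμC : μ ≤ C := by
    have h1 : μ ≤ ‖Tc v0‖ * ‖v0‖ := le_trans (real_inner_le_norm _ _) le_rfl
    have := hTle v0
    rw [hv0] at h1 this
    simpa using le_trans h1 (by simpa using this)
  set γ : ℝ := μ / C^2 with hγ
  have hγ0 : 0 < γ := by positivity
  set k2 : ℝ := 1 - μ^2 / C^2 with hk2
  have hk2nonneg : 0 ≤ k2 := by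
    rw [hk2]
    rw [sub_nonneg, div_le_one (by positivity)]
    nlinarith
  have hk2lt : k2 < 1 := by
    rw [hk2]
    have : 0 < μ^2 / C^2 := by positivity
    linarith
  -- key contraction estimate
  have hkey : ∀ z : EuclideanSpace ℝ (Fin m), ‖z - γ • Tc z‖^2 ≤ k2 * ‖z‖^2 := by
    intro z
    rw [norm_sub_sq_real, real_inner_smul_right, norm_smul]
    have h2 := hmono z
    have h3 := hTle z
    rw [real_inner_comm (Tc z) z]
    have hCne : C ≠ 0 := ne_of_gt hC0
    have hγ1 : γ * C^2 = μ := by rw [hγ]; field_simp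
    have hγ2 : γ^2 * C^4 = μ^2 := by linear_combination (γ*C^2 + μ) * hγ1
    have hk2' : k2 * C^2 = C^2 - μ^2 := by rw [hk2]; field_simp
    generalize hIdef : ⟪Tc z, z⟫ = I at h2 ⊢
    generalize hWdef : ‖Tc z‖ = W at h3 ⊢
    generalize hzdef : ‖z‖ = n at h2 h3 ⊢
    have hW0 : 0 ≤ W := hWdef ▸ norm_nonneg _
    have hn0 : 0 ≤ n := hzdef ▸ norm_nonneg _
    clear hB hip hTc hTle hmono hv0min hcont hμ hC hIdef hWdef hzdef
    clear_value k2 γ μ C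
    have hTz2 : W^2 ≤ C^2 * n^2 := by nlinarith
    have h6 : (‖γ‖ * W)^2 = γ^2 * W^2 := by
      rw [mul_pow, Real.norm_eq_abs, sq_abs]
    rw [h6]
    have expand : (n^2 - 2 * (γ * I) + γ^2 * W^2) * C^4
        = n^2 * C^4 - 2*μ*I*C^2 + μ^2*W^2 := by
      linear_combination (-2*I*C^2) * hγ1 + (W^2) * hγ2
    have rhsx : (k2 * n^2) * C^4 = n^2 * C^4 - μ^2*n^2*C^2 := by
      linear_combination (n^2*C^2) * hk2'
    have key4 : (n^2 - 2 * (γ * I) + γ^2 * W^2) * C^4 ≤ (k2 * n^2) * C^4 := by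
      rw [expand, rhsx]
      have hh1 : μ * (μ * n^2) ≤ μ * I := mul_le_mul_of_nonneg_left h2 hμpos.le
      have hh2 : μ^2 * W^2 ≤ μ^2 * (C^2 * n^2) :=
        mul_le_mul_of_nonneg_left hTz2 (sq_nonneg μ)
      nlinarith [mul_le_mul_of_nonneg_right hh1 (sq_nonneg C), hh2]
    have := le_of_mul_le_mul_right key4 (by positivity : (0:ℝ) < C^4)
    linarith
  -- contraction constant
  set k : ℝ := Real.sqrt k2 with hk
  have hk0 : 0 ≤ k := Real.sqrt_nonneg _
  have hksq : k^2 = k2 := Real.sq_sqrt hk2nonneg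
  have hklt : k < 1 := by nlinarith
  clear hμ hC hγ hk2 hk hk2nonneg hk2lt hμC hμpos hmono hv0min hv0 hv0mem hcont hne
  clear_value μ C γ k2 k
  let qE : EuclideanSpace ℝ (Fin m) := WithLp.toLp 2 q
  let G : EuclideanSpace ℝ (Fin m) → EuclideanSpace ℝ (Fin m) := fun x => x - γ • (Tc x + qE)
  let F : EuclideanSpace ℝ (Fin m) → EuclideanSpace ℝ (Fin m) :=
    fun x => WithLp.toLp 2 (fun i => max (G x i) 0 : Fin m → ℝ)
  have hGi : ∀ (x : EuclideanSpace ℝ (Fin m)) (i : Fin m),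
      G x i = x i - γ * ((B.mulVec x) i + q i) := fun x i => by simp [G, qE, hTc, mul_add]
  have hFi : ∀ (x : EuclideanSpace ℝ (Fin m)) (i : Fin m), F x i = max (G x i) 0 :=
    fun x i => rfl
  have hnorm2 : ∀ u : EuclideanSpace ℝ (Fin m), ‖u‖^2 = ∑ i, (u i)^2 := by
    intro u
    rw [EuclideanSpace.norm_eq, Real.sq_sqrt (by positivity)]
    simp [sq_abs]
  have hFG : ∀ x y, ‖F x - F y‖ ≤ ‖G x - G y‖ := by
    intro x y
    have hsq : ‖F x - F y‖^2 ≤ ‖G x - G y‖^2 := by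
      rw [hnorm2, hnorm2]
      refine Finset.sum_le_sum fun i _ => ?_
      have e1 : (F x - F y) i = F x i - F y i := rfl
      have e2 : (G x - G y) i = G x i - G y i := rfl
      rw [e1, e2, hFi, hFi]
      have habs : |max (G x i) 0 - max (G y i) 0| ≤ |G x i - G y i| :=
        abs_max_sub_max_le_abs _ _ _
      calc (max (G x i) 0 - max (G y i) 0)^2
          = |max (G x i) 0 - max (G y i) 0|^2 := (sq_abs _).symm
        _ ≤ |G x i - G y i|^2 := by
            exact pow_le_pow_left₀ (abs_nonneg _) habs 2
        _ = (G x i - G y i)^2 := sq_abs _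
    have := Real.sqrt_le_sqrt hsq
    rwa [Real.sqrt_sq (norm_nonneg _), Real.sqrt_sq (norm_nonneg _)] at this
  have hG : ∀ x y, ‖G x - G y‖ ≤ k * ‖x - y‖ := by
    intro x y
    have e : G x - G y = (x - y) - γ • Tc (x - y) := by
      simp only [G, map_sub, smul_add, smul_sub]
      abel
    rw [e]
    have h := hkey (x - y)
    have h2 : ‖(x - y) - γ • Tc (x - y)‖^2 ≤ (k * ‖x - y‖)^2 := by
      rw [mul_pow, hksq]; exact h
    calc ‖(x - y) - γ • Tc (x - y)‖
        = Real.sqrt (‖(x - y) - γ • Tc (x - y)‖^2) := (Real.sqrt_sq (norm_nonneg _)).symm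
      _ ≤ Real.sqrt ((k * ‖x - y‖)^2) := Real.sqrt_le_sqrt h2
      _ = k * ‖x - y‖ := Real.sqrt_sq (by positivity)
  have hLip : LipschitzWith k.toNNReal F := by
    apply LipschitzWith.of_dist_le_mul
    intro x y
    rw [dist_eq_norm, dist_eq_norm, Real.coe_toNNReal _ hk0]
    exact le_trans (hFG x y) (hG x y)
  have hcontr : ContractingWith k.toNNReal F := by
    constructor
    · rw [← NNReal.coe_lt_coe, Real.coe_toNNReal _ hk0]
      simpa using hklt
    · exact hLip
  set x : EuclideanSpace ℝ (Fin m) := ContractingWith.fixedPoint F hcontr with hxdef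
  have hfix : F x = x := hcontr.fixedPoint_isFixedPt
  clear_value x
  have hfi : ∀ i, max (x i - γ * ((B.mulVec x) i + q i)) 0 = x i := by
    intro i
    have := congrFun (congrArg WithLp.ofLp hfix) i
    rwa [hFi, hGi] at this
  have hx0 : ∀ i, 0 ≤ x i := by
    intro i
    have h0 := le_max_right (x i - γ * ((B.mulVec x) i + q i)) 0
    rw [hfi i] at h0
    exact h0
  refine ⟨x, hx0, ?_, ?_⟩
  · intro i
    have h := hfi i
    have h1 : x i - γ * ((B.mulVec x) i + q i) ≤ x i := by
      have h0 := le_max_left (x i - γ * ((B.mulVec x) i + q i)) 0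
      rw [hfi i] at h0
      exact h0
    have h2 : 0 ≤ γ * ((B.mulVec x + q) i) := by
      have : (B.mulVec x + q) i = (B.mulVec x) i + q i := rfl
      rw [this]; linarith
    by_contra hneg
    push_neg at hneg
    have : γ * ((B.mulVec x + q) i) < 0 := mul_neg_of_pos_of_neg hγ0 hneg
    linarith
  · have hcomp : ∀ i, x i * (B.mulVec x + q) i = 0 := by
      intro i
      rcases eq_or_lt_of_le (hx0 i) with h | h
      · rw [← h, zero_mul]
      · have ha : x i - γ * ((B.mulVec x) i + q i) = x i := by
          rcases le_or_gt (x i - γ * ((B.mulVec x) i + q i)) 0 with hle | hlt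
          · exfalso
            have := hfi i
            rw [max_eq_right hle] at this
            linarith
          · have := hfi i
            rwa [max_eq_left hlt.le] at this
        have hs0 : γ * ((B.mulVec x) i + q i) = 0 := by linarith
        have : (B.mulVec x + q) i = (B.mulVec x) i + q i := rfl
        rw [this]
        have := (mul_eq_zero.mp hs0).resolve_left (ne_of_gt hγ0)
        rw [this, mul_zero]
    simp only [dotProduct]
    exact Finset.sum_eq_zero fun i _ => hcomp i

lemma lcp_unique {m : ℕ} (B : Matrix (Fin m) (Fin m) ℝ)
    (hB : ∀ x : Fin m → ℝ, x ≠ 0 → 0 < (B.mulVec x) ⬝ᵥ x) (q : Fin m → ℝ)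
    {x y : Fin m → ℝ}
    (hx : (∀ i, 0 ≤ x i) ∧ (∀ i, 0 ≤ (B.mulVec x + q) i) ∧ x ⬝ᵥ (B.mulVec x + q) = 0)
    (hy : (∀ i, 0 ≤ y i) ∧ (∀ i, 0 ≤ (B.mulVec y + q) i) ∧ y ⬝ᵥ (B.mulVec y + q) = 0) :
    x = y := by
  by_contra hne
  have hz : x - y ≠ 0 := sub_ne_zero.mpr hne
  have hpos := hB (x - y) hz
  have hBsub : B.mulVec (x - y) = (B.mulVec x + q) - (B.mulVec y + q) := by
    rw [Matrix.mulVec_sub]; abel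
  have e1 : x ⬝ᵥ (B.mulVec x + q) = 0 := hx.2.2
  have e2 : y ⬝ᵥ (B.mulVec y + q) = 0 := hy.2.2
  have e3 : 0 ≤ (B.mulVec x + q) ⬝ᵥ y :=
    Finset.sum_nonneg fun i _ => mul_nonneg (hx.2.1 i) (hy.1 i)
  have e4 : 0 ≤ (B.mulVec y + q) ⬝ᵥ x :=
    Finset.sum_nonneg fun i _ => mul_nonneg (hy.2.1 i) (hx.1 i)
  have expand : B.mulVec (x - y) ⬝ᵥ (x - y)
      = ((B.mulVec x + q) ⬝ᵥ x - (B.mulVec x + q) ⬝ᵥ y)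
        - ((B.mulVec y + q) ⬝ᵥ x - (B.mulVec y + q) ⬝ᵥ y) := by
    rw [hBsub, sub_dotProduct, dotProduct_sub, dotProduct_sub]
  have c1 : (B.mulVec x + q) ⬝ᵥ x = 0 := by rw [dotProduct_comm]; exact e1
  have c2 : (B.mulVec y + q) ⬝ᵥ y = 0 := by rw [dotProduct_comm]; exact e2
  rw [expand, c1, c2] at hpos
  linarith


lemma isUnit_of_inj {m : ℕ} {L : Matrix (Fin m) (Fin m) ℝ}
    (h : ∀ x : Fin m → ℝ, L.mulVec x = 0 → x = 0) : IsUnit L := by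
  rw [Matrix.isUnit_iff_isUnit_det, isUnit_iff_ne_zero]
  intro hdet
  obtain ⟨w, hw0, hw⟩ := Matrix.exists_mulVec_eq_zero_iff.mpr hdet
  exact hw0 (h w hw)

-- killer lemma: a nonpositive row kills the S property
lemma not_sprop_of_row {m : ℕ} (B : Matrix (Fin m) (Fin m) ℝ) (i : Fin m)
    (h : ∀ j, B i j ≤ 0) : ¬ (∀ q : Fin m → ℝ, ∃ x : Fin m → ℝ,
      (∀ i, 0 ≤ x i) ∧ ∀ i, 0 ≤ (B.mulVec x + q) i) := by
  intro hS
  obtain ⟨x, hx, hxq⟩ := hS (fun _ => -1)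
  have h1 := hxq i
  have h2 : (B.mulVec x) i ≤ 0 := by
    simp only [Matrix.mulVec, dotProduct]
    exact Finset.sum_nonpos fun j _ => mul_nonpos_of_nonpos_of_nonneg (h j) (hx j)
  rw [Pi.add_apply] at h1
  linarith

-- case B : c = 0, any invertible matrix with column k equal to v
lemma caseB {m : ℕ} (v : Fin m → ℝ) (k : Fin m) (hvk : v k ≠ 0) :
    ∃ L : Matrix (Fin m) (Fin m) ℝ, IsUnit L ∧ (∀ a, L a k = v a) := by
  refine ⟨Matrix.of fun a j => if j = k then v a else if a = j then (1:ℝ) else 0,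
    isUnit_of_inj ?_, fun a => by simp⟩
  intro x hx
  set L := Matrix.of fun a j => if j = k then v a else if a = j then (1:ℝ) else 0 with hL
  have h5 : ∀ a, (L.mulVec x) a = v a * x k + (x a - if a = k then x k else 0) := by
    intro a
    have e : ∀ j, L a j * x j
        = (if j = k then v a * x k else 0) + ((if a = j then x j else 0) - if j = k then (if a = j then x j else 0) else 0) := by
      intro j
      by_cases hj : j = k
      · simp [L, hj]
      · by_cases ha : a = j <;> simp [L, hj, ha]
    simp only [Matrix.mulVec, dotProduct]
    rw [Finset.sum_congr rfl fun j _ => e j]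
    rw [Finset.sum_add_distrib, Finset.sum_sub_distrib]
    simp [Finset.sum_ite_eq, Finset.sum_ite_eq']
  have hxk : x k = 0 := by
    have := congrFun hx k
    rw [h5 k] at this
    simp at this
    rcases this with h | h
    · exact absurd h hvk
    · exact h
  funext a
  have := congrFun hx a
  rw [h5 a, hxk] at this
  simp at this
  by_cases ha : a = k
  · rw [ha]; exact hxk
  · simpa [ha] using this


-- case A : strictly negative ⟨c,v⟩
lemma caseA {m : ℕ} (v c : Fin m → ℝ) (k : Fin m) (hvk : v k ≠ 0) (hs : c ⬝ᵥ v < 0) :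
    ∃ L : Matrix (Fin m) (Fin m) ℝ, IsUnit L ∧ (∀ a, L a k = v a) ∧
      ∀ j, c ⬝ᵥ (fun a => L a j) ≤ 0 := by
  have hsum : ∑ a, c a * v a = c ⬝ᵥ v := rfl
  obtain ⟨s, hs2⟩ : ∃ s, s = c ⬝ᵥ v := ⟨_, rfl⟩
  rw [← hs2] at hs hsum
  have hsne : s ≠ 0 := ne_of_lt hs
  set L := Matrix.of fun a j =>
    if j = k then v a else (if a = j then (1:ℝ) else 0) - v a * (c j / s) with hL
  have hcolk : ∀ a, L a k = v a := fun a => by simp [L]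
  have hcol : ∀ j, c ⬝ᵥ (fun a => L a j) = if j = k then s else 0 := by
    intro j
    by_cases hj : j = k
    · subst hj
      rw [if_pos rfl]
      have hfe : (fun a => L a j) = v := funext hcolk
      rw [hfe]
      exact hs2.symm
    · simp only [if_neg hj]
      simp only [dotProduct, L, Matrix.of_apply, if_neg hj]
      have e : ∀ a, c a * ((if a = j then (1:ℝ) else 0) - v a * (c j / s))
          = (if a = j then c a else 0) - (c a * v a) * (c j / s) := by
        intro a; by_cases ha : a = j <;> simp [ha] <;> ring
      rw [Finset.sum_congr rfl fun a _ => e a, Finset.sum_sub_distrib, ← Finset.sum_mul,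
        Finset.sum_ite_eq' Finset.univ j c, hsum]
      simp only [Finset.mem_univ, if_pos]
      field_simp
      ring
  refine ⟨L, isUnit_of_inj ?_, hcolk, fun j => by
    rw [hcol j]; split
    · exact le_of_lt hs
    · exact le_refl 0⟩
  intro x hx
  have h1 : (c ᵥ* L) ⬝ᵥ x = 0 := by
    rw [← Matrix.dotProduct_mulVec, hx, dotProduct_zero]
  have hvm : ∀ j, (c ᵥ* L) j = if j = k then s else 0 := fun j => hcol j
  have h2 : (c ᵥ* L) ⬝ᵥ x = s * x k := by
    simp only [dotProduct]
    rw [Finset.sum_congr rfl fun j _ => by rw [hvm j]]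
    simp [ite_mul, Finset.sum_ite_eq']
  have hxk : x k = 0 := by
    rw [h2] at h1
    exact (mul_eq_zero.mp h1).resolve_left hsne
  have h3 : ∀ a, x a - v a * ((c ⬝ᵥ x) / s) = 0 := by
    intro a
    have h4 : (L.mulVec x) a = 0 := by rw [hx]; rfl
    have h5 : (L.mulVec x) a
        = ∑ j, ((if a = j then (1:ℝ) else 0) - v a * (c j / s)) * x j := by
      simp only [Matrix.mulVec, dotProduct]
      refine Finset.sum_congr rfl fun j _ => ?_
      by_cases hj : j = k
      · rw [hj, hxk, mul_zero, mul_zero]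
      · simp [L, hj]
    rw [h5] at h4
    have e : ∀ j, ((if a = j then (1:ℝ) else 0) - v a * (c j / s)) * x j
        = (if a = j then x j else 0) - v a / s * (c j * x j) := by
      intro j; by_cases hj : a = j <;> simp [hj] <;> ring
    rw [Finset.sum_congr rfl fun j _ => e j, Finset.sum_sub_distrib, ← Finset.mul_sum,
      Finset.sum_ite_eq Finset.univ a x] at h4
    simp only [Finset.mem_univ, if_pos] at h4
    have hcx : ∑ j, c j * x j = c ⬝ᵥ x := rfl
    rw [hcx] at h4
    linear_combination h4
  have ht : (c ⬝ᵥ x) / s = 0 := by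
    have h6 := h3 k
    rw [hxk] at h6
    have := mul_eq_zero.mp (by linarith : v k * ((c ⬝ᵥ x) / s) = 0)
    exact this.resolve_left hvk
  funext a
  have h7 := h3 a
  rw [ht, mul_zero, sub_zero] at h7
  exact h7

-- case C : ⟨c,v⟩ = 0 and v, c linearly independent (witnessed by a 2x2 minor)
lemma caseC {m : ℕ} (v c : Fin m → ℝ) (k l : Fin m)
    (hm : v k * c l - v l * c k ≠ 0) (hvc : c ⬝ᵥ v = 0) :
    ∃ L : Matrix (Fin m) (Fin m) ℝ, IsUnit L ∧ (∀ a, L a k = v a) ∧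
      ∀ j, c ⬝ᵥ (fun a => L a j) ≤ 0 := by
  have hkl : k ≠ l := by rintro rfl; apply hm; ring
  have hck_or : c k ≠ 0 ∨ c l ≠ 0 := by
    by_contra h
    push_neg at h
    apply hm
    rw [h.1, h.2]
    ring
  have hci : ∃ i, c i ≠ 0 := by rcases hck_or with h | h; exacts [⟨k, h⟩, ⟨l, h⟩]
  have hEsum : ∑ a, c a * c a = c ⬝ᵥ c := rfl
  obtain ⟨E, hE2⟩ : ∃ E, E = c ⬝ᵥ c := ⟨_, rfl⟩
  rw [← hE2] at hEsum
  have hE : 0 < E := by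
    obtain ⟨i, hi⟩ := hci
    have h1 : c i * c i ≤ ∑ a, c a * c a :=
      Finset.single_le_sum (fun a _ => mul_self_nonneg (c a)) (Finset.mem_univ i)
    have h2 : 0 < c i * c i := mul_self_pos.mpr hi
    rw [hEsum] at h1
    linarith
  have hEne : E ≠ 0 := ne_of_gt hE
  set L := Matrix.of fun a j =>
    if j = k then v a else if j = l then -c a
    else (if a = j then (1:ℝ) else 0) - c a * (c j / E) with hL
  have hcolk : ∀ a, L a k = v a := fun a => by simp [L]
  have hcol : ∀ j, c ⬝ᵥ (fun a => L a j) = if j = k then 0 else if j = l then -E else 0 := by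
    intro j
    by_cases hjk : j = k
    · subst hjk
      rw [if_pos rfl]
      have hfe : (fun a => L a j) = v := funext hcolk
      rw [hfe]
      exact hvc
    · by_cases hjl : j = l
      · subst hjl
        rw [if_neg hjk, if_pos rfl]
        have hfe : (fun a => L a j) = fun a => -c a := funext fun a => by simp [L, hjk]
        rw [hfe]
        simp only [dotProduct]
        rw [← hEsum, ← Finset.sum_neg_distrib]
        exact Finset.sum_congr rfl fun a _ => by ring
      · rw [if_neg hjk, if_neg hjl]
        simp only [dotProduct, L, Matrix.of_apply, if_neg hjk, if_neg hjl]
        have e : ∀ a, c a * ((if a = j then (1:ℝ) else 0) - c a * (c j / E))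
            = (if a = j then c a else 0) - (c a * c a) * (c j / E) := by
          intro a; by_cases ha : a = j <;> simp [ha] <;> ring
        rw [Finset.sum_congr rfl fun a _ => e a, Finset.sum_sub_distrib, ← Finset.sum_mul,
          Finset.sum_ite_eq' Finset.univ j c, hEsum]
        simp only [Finset.mem_univ, if_pos]
        field_simp
        ring
  refine ⟨L, isUnit_of_inj ?_, hcolk, fun j => by
    rw [hcol j]
    split
    · exact le_refl 0
    · split
      · linarith
      · exact le_refl 0⟩
  intro x hx
  have h1 : (c ᵥ* L) ⬝ᵥ x = 0 := by
    rw [← Matrix.dotProduct_mulVec, hx, dotProduct_zero]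
  have hvm : ∀ j, (c ᵥ* L) j = if j = k then 0 else if j = l then -E else 0 :=
    fun j => hcol j
  have h2 : (c ᵥ* L) ⬝ᵥ x = -E * x l := by
    simp only [dotProduct]
    have e : ∀ j, (c ᵥ* L) j * x j = if j = l then -E * x j else 0 := by
      intro j
      rw [hvm j]
      by_cases hjk : j = k
      · subst hjk
        rw [if_pos rfl, zero_mul, if_neg hkl]
      · rw [if_neg hjk]
        by_cases hjl : j = l
        · rw [if_pos hjl, if_pos hjl]
        · rw [if_neg hjl, if_neg hjl, zero_mul]
    rw [Finset.sum_congr rfl fun j _ => e j, Finset.sum_ite_eq' Finset.univ l]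
    simp
  have hxl : x l = 0 := by
    rw [h2] at h1
    rcases mul_eq_zero.mp h1 with h | h
    · exact absurd (neg_eq_zero.mp h) hEne
    · exact h
  -- main coordinate identity
  have h3 : ∀ a, x a - c a * ((c ⬝ᵥ x) / E)
      + (v a - ((if a = k then (1:ℝ) else 0) - c a * (c k / E))) * x k = 0 := by
    intro a
    have h4 : (L.mulVec x) a = 0 := by rw [hx]; rfl
    have e : ∀ j, L a j * x j
        = ((if a = j then (1:ℝ) else 0) - c a * (c j / E)) * x j
          + (if j = k then (v a - ((if a = k then (1:ℝ) else 0) - c a * (c k / E))) * x k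
             else 0) := by
      intro j
      by_cases hjk : j = k
      · rw [hjk]
        have hLak : L a k = v a := hcolk a
        rw [hLak, if_pos rfl]
        ring
      · by_cases hjl : j = l
        · rw [hjl]
          have hLal : L a l = -c a := by simp [L, (Ne.symm hkl : ¬ l = k)]
          rw [hLal, if_neg (Ne.symm hkl), hxl]
          ring
        · have hLaj : L a j = (if a = j then (1:ℝ) else 0) - c a * (c j / E) := by
            simp [L, hjk, hjl]
          rw [hLaj, if_neg hjk]
          ring
    have h5 : (L.mulVec x) a
        = (∑ j, ((if a = j then (1:ℝ) else 0) - c a * (c j / E)) * x j)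
          + (v a - ((if a = k then (1:ℝ) else 0) - c a * (c k / E))) * x k := by
      simp only [Matrix.mulVec, dotProduct]
      rw [Finset.sum_congr rfl fun j _ => e j, Finset.sum_add_distrib,
        Finset.sum_ite_eq' Finset.univ k]
      simp
    have e2 : ∀ j, ((if a = j then (1:ℝ) else 0) - c a * (c j / E)) * x j
        = (if a = j then x j else 0) - c a / E * (c j * x j) := by
      intro j; by_cases hj : a = j <;> simp [hj] <;> ring
    rw [h5] at h4
    rw [Finset.sum_congr rfl fun j _ => e2 j, Finset.sum_sub_distrib, ← Finset.mul_sum,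
      Finset.sum_ite_eq Finset.univ a x] at h4
    simp only [Finset.mem_univ, if_pos] at h4
    have hcx : ∑ j, c j * x j = c ⬝ᵥ x := rfl
    rw [hcx] at h4
    linear_combination h4
  -- solve the 2x2 system
  have hkeq := h3 k
  have hleq := h3 l
  rw [if_pos rfl] at hkeq
  rw [if_neg (Ne.symm hkl), hxl] at hleq
  have hxk : x k = 0 := by
    have hcross : x k * (v k * c l - v l * c k) = 0 := by
      linear_combination (c l) * hkeq - (c k) * hleq
    exact (mul_eq_zero.mp hcross).resolve_right hm
  have ht : (c ⬝ᵥ x) / E = 0 := by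
    rw [hxk, mul_zero, add_zero] at hkeq hleq
    -- hkeq : x k - c k * ((c⬝x)/E) = 0 with x k = 0... careful: hkeq was at a = k
    rcases hck_or with h | h
    · have : c k * ((c ⬝ᵥ x) / E) = 0 := by linarith
      exact (mul_eq_zero.mp this).resolve_left h
    · have : c l * ((c ⬝ᵥ x) / E) = 0 := by linarith
      exact (mul_eq_zero.mp this).resolve_left h
  funext a
  have h7 := h3 a
  rw [hxk, mul_zero, add_zero, ht, mul_zero, sub_zero] at h7
  exact h7

lemma exists_halfspace {m : ℕ} (v c : Fin m → ℝ) (hv : v ≠ 0) (hcv : c ⬝ᵥ v ≤ 0) :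
    ∃ (L : Matrix (Fin m) (Fin m) ℝ) (k : Fin m), IsUnit L ∧ (∀ a, L a k = v a) ∧
      ∀ j, c ⬝ᵥ (fun a => L a j) ≤ 0 := by
  obtain ⟨k, hvk⟩ : ∃ k, v k ≠ 0 := Function.ne_iff.mp hv
  rcases lt_or_eq_of_le hcv with hlt | heq
  · obtain ⟨L, h1, h2, h3⟩ := caseA v c k hvk hlt
    exact ⟨L, k, h1, h2, h3⟩
  · by_cases hminor : ∃ k' l', v k' * c l' - v l' * c k' ≠ 0
    · obtain ⟨k', l', hmm⟩ := hminor
      obtain ⟨L, h1, h2, h3⟩ := caseC v c k' l' hmm heq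
      exact ⟨L, k', h1, h2, h3⟩
    · push_neg at hminor
      have hvv : 0 < ∑ a, v a * v a := by
        have h1 : v k * v k ≤ ∑ a, v a * v a :=
          Finset.single_le_sum (fun a _ => mul_self_nonneg (v a)) (Finset.mem_univ k)
        have h2 : 0 < v k * v k := mul_self_pos.mpr hvk
        linarith
      have hcvsum : ∑ a, c a * v a = 0 := heq
      have hck : c k = 0 := by
        have h1 : ∑ a, v a * (v k * c a) = ∑ a, v a * (v a * c k) := by
          refine Finset.sum_congr rfl fun a _ => ?_
          linear_combination (v a) * (hminor k a)
        have h2 : ∑ a, v a * (v k * c a) = v k * ∑ a, c a * v a := by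
          rw [Finset.mul_sum]
          exact Finset.sum_congr rfl fun a _ => by ring
        have h3 : ∑ a, v a * (v a * c k) = (∑ a, v a * v a) * c k := by
          rw [Finset.sum_mul]
          exact Finset.sum_congr rfl fun a _ => by ring
        rw [h2, h3, hcvsum, mul_zero] at h1
        rcases mul_eq_zero.mp h1.symm with h | h
        · exact absurd h (ne_of_gt hvv)
        · exact h
      have hc0 : c = 0 := by
        funext a
        have h1 := hminor k a
        rw [hck, mul_zero] at h1
        have h2 : v k * c a = 0 := by linarith
        exact (mul_eq_zero.mp h2).resolve_left hvk
      obtain ⟨L, h1, h2⟩ := caseB v k hvk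
      exact ⟨L, k, h1, h2, fun j => by rw [hc0]; simp⟩

lemma pd_of_all_S {m : ℕ} (A : Matrix (Fin m) (Fin m) ℝ)
    (hS : ∀ L : Matrix (Fin m) (Fin m) ℝ, IsUnit L → ∀ q : Fin m → ℝ,
      ∃ x : Fin m → ℝ, (∀ i, 0 ≤ x i) ∧ ∀ i, 0 ≤ ((Lᵀ * A * L).mulVec x + q) i) :
    ∀ x : Fin m → ℝ, x ≠ 0 → 0 < (A.mulVec x) ⬝ᵥ x := by
  intro v hv
  by_contra hle
  push_neg at hle
  set c := Aᵀ.mulVec v with hc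
  have hcveq : c ⬝ᵥ v = (A.mulVec v) ⬝ᵥ v := by
    rw [hc, Matrix.mulVec_transpose, ← Matrix.dotProduct_mulVec, dotProduct_comm]
  have hcv : c ⬝ᵥ v ≤ 0 := by rw [hcveq]; exact hle
  obtain ⟨L, k, hU, hcolk, hcols⟩ := exists_halfspace v c hv hcv
  have hrow : ∀ j, (Lᵀ * A * L) k j ≤ 0 := by
    intro j
    have e : (Lᵀ * A * L) k j = c ⬝ᵥ (fun a => L a j) := by
      rw [Matrix.mul_assoc, Matrix.mul_apply]
      have e1 : ∀ a, (Lᵀ) k a * (A * L) a j = v a * (A * L) a j := fun a => by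
        rw [Matrix.transpose_apply, hcolk a]
      rw [Finset.sum_congr rfl fun a _ => e1 a]
      have e2 : ∑ a, v a * (A * L) a j = (v ᵥ* (A * L)) j := rfl
      rw [e2, ← Matrix.vecMul_vecMul]
      rw [show v ᵥ* A = c from by rw [hc, Matrix.mulVec_transpose]]
      rfl
    rw [e]; exact hcols j
  exact not_sprop_of_row _ k hrow (hS L hU)

lemma pd_congr {m : ℕ} (A L : Matrix (Fin m) (Fin m) ℝ)
    (hA : ∀ x : Fin m → ℝ, x ≠ 0 → 0 < (A.mulVec x) ⬝ᵥ x) (hL : IsUnit L) :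
    ∀ x : Fin m → ℝ, x ≠ 0 → 0 < ((Lᵀ * A * L).mulVec x) ⬝ᵥ x := by
  intro x hx
  have hLx : L.mulVec x ≠ 0 := by
    intro h0
    have hdet := (Matrix.isUnit_iff_isUnit_det L).mp hL
    rw [isUnit_iff_ne_zero] at hdet
    exact hdet (Matrix.exists_mulVec_eq_zero_iff.mp ⟨x, hx, h0⟩)
  have e : ((Lᵀ * A * L).mulVec x) ⬝ᵥ x = (A.mulVec (L.mulVec x)) ⬝ᵥ (L.mulVec x) := by
    rw [Matrix.mul_assoc, ← Matrix.mulVec_mulVec, Matrix.mulVec_transpose,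
      ← Matrix.dotProduct_mulVec, ← Matrix.mulVec_mulVec]
  rw [e]
  exact hA _ hLx


end Aux

/-- The following are equivalent: every member of `D(A)` is an S-matrix; every member of
`D(A)` is a Q-matrix; every member of `D(A)` is a P-matrix; `A` is positive definite. -/
theorem stmt11 {m : ℕ} (A : Matrix (Fin m) (Fin m) ℝ) :
    ((∀ L : Matrix (Fin m) (Fin m) ℝ, IsUnit L → Sprop (Lᵀ * A * L)) ↔
      (∀ x : Fin m → ℝ, x ≠ 0 → 0 < (A.mulVec x) ⬝ᵥ x)) ∧
    ((∀ L : Matrix (Fin m) (Fin m) ℝ, IsUnit L → Qprop (Lᵀ * A * L)) ↔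
      (∀ x : Fin m → ℝ, x ≠ 0 → 0 < (A.mulVec x) ⬝ᵥ x)) ∧
    ((∀ L : Matrix (Fin m) (Fin m) ℝ, IsUnit L → Pprop (Lᵀ * A * L)) ↔
      (∀ x : Fin m → ℝ, x ≠ 0 → 0 < (A.mulVec x) ⬝ᵥ x)) := by
  have hPD_P : (∀ x : Fin m → ℝ, x ≠ 0 → 0 < (A.mulVec x) ⬝ᵥ x) →
      ∀ L : Matrix (Fin m) (Fin m) ℝ, IsUnit L → Pprop (Lᵀ * A * L) := by
    intro h L hL q
    have hpd := pd_congr A L h hL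
    obtain ⟨x, hx⟩ := lcp_exists (Lᵀ * A * L) hpd q
    exact ⟨x, hx, fun y hy => lcp_unique (Lᵀ * A * L) hpd q hy hx⟩
  have hPQ : ∀ B : Matrix (Fin m) (Fin m) ℝ, Pprop B → Qprop B :=
    fun B h q => (h q).exists
  have hQS : ∀ B : Matrix (Fin m) (Fin m) ℝ, Qprop B → Sprop B := by
    intro B h q
    obtain ⟨x, h1, h2, _⟩ := h q
    exact ⟨x, h1, h2⟩
  have hS_PD : (∀ L : Matrix (Fin m) (Fin m) ℝ, IsUnit L → Sprop (Lᵀ * A * L)) →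
      (∀ x : Fin m → ℝ, x ≠ 0 → 0 < (A.mulVec x) ⬝ᵥ x) :=
    fun h => pd_of_all_S A (fun L hL => h L hL)
  refine ⟨⟨hS_PD, fun h L hL => hQS _ (hPQ _ (hPD_P h L hL))⟩,
    ⟨fun h => hS_PD (fun L hL => hQS _ (h L hL)), fun h L hL => hPQ _ (hPD_P h L hL)⟩,
    ⟨fun h => hS_PD (fun L hL => hQS _ (hPQ _ (h L hL))), hPD_P⟩⟩
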